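/- Let t_V, t_D ≥ 0, let q_1, …, q_m ∈ [0,1], and let 1 ≤ l ≤ m−1. Let q̃ be the sequence obtained from q by exchanging the entries at positions l and l+1. Then T(q_1, …, q_m) − T(q̃_1, …, q̃_m) = t_V · (q_l − q_{l+1}) · ∏_{j=1}^{l-1} q_j. -/

import Mathlib

/-- Expected episode duration: `expDur tV tD [q₁, …, qₘ]` is the expected annotation time of
the strategy `VᵐD` that verifies boxes with rejection probabilities `q₁, …, qₘ` in order
(each verification taking time `tV`) and draws manually (taking time `tD`) if all are
rejected: `expDur tV tD [] = tD` and `expDur tV tD (q :: qs) = tV + q * expDur tV tD qs`. -/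
noncomputable def expDur (tV tD : ℝ) : List ℝ → ℝ
  | [] => tD
  | q :: qs => tV + q * expDur tV tD qs

/-- Exchanging the adjacent rejection probabilities at positions `l` and `l+1`
(here `l = A.length + 1`, so `1 ≤ l ≤ m - 1`) changes the expected duration by
`t_V · (q_l - q_{l+1}) · ∏_{j=1}^{l-1} q_j`. -/
theorem expDur_swap_adjacent (tV tD : ℝ) (htV : 0 ≤ tV) (htD : 0 ≤ tD)
    (A B : List ℝ) (x y : ℝ)
    (hA : ∀ q ∈ A, 0 ≤ q ∧ q ≤ 1) (hB : ∀ q ∈ B, 0 ≤ q ∧ q ≤ 1)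
    (hx : 0 ≤ x ∧ x ≤ 1) (hy : 0 ≤ y ∧ y ≤ 1) :
    expDur tV tD (A ++ x :: y :: B) - expDur tV tD (A ++ y :: x :: B)
      = tV * (x - y) * A.prod := by
  induction A with
  | nil => simp [expDur]; ring
  | cons a A ih =>
    have := ih (fun q hq => hA q (List.mem_cons_of_mem a hq))
    simp only [List.cons_append, expDur, List.prod_cons]
    linear_combination a * this
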